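/- Let a < b, c ∈ ℝ, and let ε → 0+ be a sequence admitting expansion data (a1,a2,b1,b2,c1,c2). Then: 0 ≤ a1 ≤ 1, with a2 ≤ 0 if a1 = 1 and a2 ≥ 0 if a1 = 0; 0 ≤ b1 ≤ 1, with b2 ≤ 0 if b1 = 1 and b2 ≥ 0 if b1 = 0; |c1| ≤ 1/(b−a)², with c2 ≤ 1/(b−a)³ if c1 = 1/(b−a)², and c2 ≥ 1/(b−a)³ if c1 = −1/(b−a)². -/

import Mathlib

open Filter Asymptotics Set

noncomputable def kk1 (a c ε : ℝ) : ℤ := ⌈a / ε - c⌉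
noncomputable def kk2 (b c ε : ℝ) : ℤ := ⌊b / ε - c⌋
noncomputable def NN (a b c ε : ℝ) : ℤ := kk2 b c ε - kk1 a c ε + 1

/-- A positive sequence `ε → 0⁺` admits expansion data `(a1,a2,b1,b2,c1,c2)`
relative to `(a,b,c)` if along the sequence
`ε(c+k1) − a = a1 ε + a2 ε² + o(ε²)`, `b − ε(c+k2) = b1 ε + b2 ε² + o(ε²)`,
and `1/(Nε) = 1/(b−a) + c1 ε + c2 ε² + o(ε²)`. -/
def AdmitsExpansion (a b c : ℝ) (ε : ℕ → ℝ) (a1 a2 b1 b2 c1 c2 : ℝ) : Prop :=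
  (∀ n, 0 < ε n) ∧ Tendsto ε atTop (nhds 0) ∧
  (fun n => ε n * (c + (kk1 a c (ε n) : ℝ)) - a - (a1 * ε n + a2 * ε n ^ 2))
    =o[atTop] (fun n => ε n ^ 2) ∧
  (fun n => b - ε n * (c + (kk2 b c (ε n) : ℝ)) - (b1 * ε n + b2 * ε n ^ 2))
    =o[atTop] (fun n => ε n ^ 2) ∧
  (fun n => 1 / ((NN a b c (ε n) : ℝ) * ε n) - (1 / (b - a) + c1 * ε n + c2 * ε n ^ 2))
    =o[atTop] (fun n => ε n ^ 2)


lemma littleo_to_tendsto {ε F : ℕ → ℝ} (hε : ∀ n, 0 < ε n)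
    (ho : F =o[atTop] (fun n => ε n ^ 2)) :
    Tendsto (fun n => F n / ε n ^ 2) atTop (nhds 0) := by
  rw [isLittleO_iff_tendsto] at ho
  · exact ho
  · intro n hn
    exact absurd hn (pow_ne_zero 2 (hε n).ne')

lemma partA (ε F : ℕ → ℝ) (hε : ∀ n, 0 < ε n) (hε0 : Tendsto ε atTop (nhds 0))
    (hF0 : ∀ n, 0 ≤ F n) (hF1 : ∀ n, F n < ε n) (p q : ℝ)
    (ho : (fun n => F n - (p * ε n + q * ε n ^ 2)) =o[atTop] (fun n => ε n ^ 2)) :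
    (0 ≤ p ∧ p ≤ 1) ∧ (p = 1 → q ≤ 0) ∧ (p = 0 → 0 ≤ q) := by
  have hεne : ∀ n, ε n ≠ 0 := fun n => (hε n).ne'
  have hD := littleo_to_tendsto hε ho
  set D := fun n => (F n - (p * ε n + q * ε n ^ 2)) / ε n ^ 2 with hDdef
  have hFe : Tendsto (fun n => F n / ε n) atTop (nhds p) := by
    have heq : ∀ n, F n / ε n = p + q * ε n + ε n * D n := by
      intro n; rw [hDdef]; field_simp [hεne n]; ring
    have : Tendsto (fun n => p + q * ε n + ε n * D n) atTop
        (nhds (p + q * 0 + 0 * 0)) :=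
      (tendsto_const_nhds.add (tendsto_const_nhds.mul hε0)).add (hε0.mul hD)
    simpa [heq] using this.congr (fun n => (heq n).symm)
  refine ⟨⟨?_, ?_⟩, ?_, ?_⟩
  · exact ge_of_tendsto' hFe fun n => div_nonneg (hF0 n) (hε n).le
  · exact le_of_tendsto' hFe fun n => (div_le_one (hε n)).2 (hF1 n).le
  · intro hp
    have heq : ∀ n, (F n - ε n) / ε n ^ 2 = q + D n := by
      intro n; rw [hDdef, hp]; field_simp [hεne n]; ring
    have hT : Tendsto (fun n => (F n - ε n) / ε n ^ 2) atTop (nhds q) := by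
      have : Tendsto (fun n => q + D n) atTop (nhds (q + 0)) := tendsto_const_nhds.add hD
      simpa using this.congr (fun n => (heq n).symm)
    exact le_of_tendsto' hT fun n =>
      div_nonpos_of_nonpos_of_nonneg (by linarith [hF1 n]) (by positivity)
  · intro hp
    have heq : ∀ n, F n / ε n ^ 2 = q + D n := by
      intro n; rw [hDdef, hp]; field_simp [hεne n]; ring
    have hT : Tendsto (fun n => F n / ε n ^ 2) atTop (nhds q) := by
      have : Tendsto (fun n => q + D n) atTop (nhds (q + 0)) := tendsto_const_nhds.add hD
      simpa using this.congr (fun n => (heq n).symm)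
    exact ge_of_tendsto' hT fun n => div_nonneg (hF0 n) (by positivity)

lemma partC (ε P : ℕ → ℝ) (L : ℝ) (hL : 0 < L) (hε : ∀ n, 0 < ε n)
    (hε0 : Tendsto ε atTop (nhds 0))
    (hP1 : ∀ n, L - ε n < P n) (hP2 : ∀ n, P n ≤ L + ε n) (c1 c2 : ℝ)
    (ho : (fun n => 1 / P n - (1 / L + c1 * ε n + c2 * ε n ^ 2)) =o[atTop] (fun n => ε n ^ 2)) :
    |c1| ≤ 1 / L ^ 2 ∧ (c1 = 1 / L ^ 2 → c2 ≤ 1 / L ^ 3) ∧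
      (c1 = -1 / L ^ 2 → 1 / L ^ 3 ≤ c2) := by
  have hεne : ∀ n, ε n ≠ 0 := fun n => (hε n).ne'
  have hLne : L ≠ 0 := hL.ne'
  have hevε : ∀ᶠ n in atTop, ε n < L / 2 := hε0.eventually_lt_const (by linarith)
  have hPpos : ∀ᶠ n in atTop, 0 < P n := by
    filter_upwards [hevε] with n hn
    have := hP1 n; linarith
  obtain ⟨D, hD, hDe⟩ : ∃ D : ℕ → ℝ, Tendsto D atTop (nhds 0) ∧
      ∀ n, 1 / P n - 1 / L = c1 * ε n + c2 * ε n ^ 2 + ε n ^ 2 * D n := by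
    refine ⟨fun n => (1 / P n - (1 / L + c1 * ε n + c2 * ε n ^ 2)) / ε n ^ 2,
      littleo_to_tendsto hε ho, fun n => ?_⟩
    field_simp [hεne n]; ring
  have hPL : Tendsto P atTop (nhds L) := by
    have h1 : Tendsto (fun n => L - ε n) atTop (nhds L) := by
      simpa using tendsto_const_nhds.sub hε0
    have h2 : Tendsto (fun n => L + ε n) atTop (nhds L) := by
      simpa using tendsto_const_nhds.add hε0
    exact tendsto_of_tendsto_of_tendsto_of_le_of_le h1 h2
      (fun n => (hP1 n).le) (fun n => hP2 n)
  set u := fun n => P n - L with hudef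
  have hkey : ∀ᶠ n in atTop, u n = -(c1 * ε n + c2 * ε n ^ 2 + ε n ^ 2 * D n) * L * P n := by
    filter_upwards [hPpos] with n hn
    rw [← hDe n, hudef]; field_simp [hn.ne', hLne]; ring
  have hue : Tendsto (fun n => u n / ε n) atTop (nhds (-c1 * L ^ 2)) := by
    have hT : Tendsto (fun n => -(c1 + c2 * ε n + ε n * D n) * L * P n) atTop
        (nhds (-(c1 + c2 * 0 + 0 * 0) * L * L)) :=
      (((tendsto_const_nhds.add (tendsto_const_nhds.mul hε0)).add
        (hε0.mul hD)).neg.mul tendsto_const_nhds).mul hPL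
    have heq : ∀ᶠ n in atTop, -(c1 + c2 * ε n + ε n * D n) * L * P n = u n / ε n := by
      filter_upwards [hkey] with n hn
      rw [hn]; field_simp [hεne n]
    have h4 := hT.congr' heq
    convert h4 using 2; ring
  have hub : ∀ n, |u n / ε n| ≤ 1 := by
    intro n
    rw [abs_div, abs_of_pos (hε n), div_le_one (hε n), abs_le]
    constructor
    · have := hP1 n; simp only [hudef]; linarith
    · have := hP2 n; simp only [hudef]; linarith
  refine ⟨?_, ?_, ?_⟩
  · have h1 : |(-c1 * L ^ 2)| ≤ 1 := le_of_tendsto' hue.abs hub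
    rw [abs_mul, abs_neg, abs_of_pos (by positivity : (0:ℝ) < L ^ 2)] at h1
    rw [le_div_iff₀ (by positivity : (0:ℝ) < L ^ 2)]
    linarith
  · intro hc1
    subst hc1
    have heq : ∀ᶠ n in atTop,
        -(u n / ε n) / L - L * P n * (c2 + D n) = (ε n + u n) / ε n ^ 2 := by
      filter_upwards [hPpos] with n hn
      have h9 : D n = (1 / P n - 1 / L - 1 / L ^ 2 * ε n - c2 * ε n ^ 2) / ε n ^ 2 := by
        rw [eq_div_iff (pow_ne_zero 2 (hεne n))]
        linear_combination -hDe n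
      simp only [hudef]
      rw [h9]; field_simp [hεne n, hLne, hn.ne']; ring
    have hT : Tendsto (fun n => -(u n / ε n) / L - L * P n * (c2 + D n)) atTop
        (nhds (1 / L - L * L * c2)) := by
      have h5 := (hue.neg.div_const L).sub
        (((tendsto_const_nhds : Tendsto (fun _ : ℕ => L) atTop (nhds L)).mul hPL).mul
          ((tendsto_const_nhds : Tendsto (fun _ : ℕ => c2) atTop (nhds c2)).add hD))
      convert h5 using 2
      field_simp; ring
    have hQ := hT.congr' heq
    have hge : 0 ≤ 1 / L - L * L * c2 := by
      refine ge_of_tendsto' hQ fun n => div_nonneg ?_ (by positivity)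
      have := hP1 n; simp only [hudef]; linarith
    have h7 : 1 / L * L = 1 := by field_simp
    rw [le_div_iff₀ (by positivity : (0:ℝ) < L ^ 3)]
    nlinarith [mul_nonneg hge hL.le, h7]
  · intro hc1
    subst hc1
    have heq : ∀ᶠ n in atTop,
        -(u n / ε n) / L + L * P n * (c2 + D n) = (ε n - u n) / ε n ^ 2 := by
      filter_upwards [hPpos] with n hn
      have h9 : D n = (1 / P n - 1 / L - -1 / L ^ 2 * ε n - c2 * ε n ^ 2) / ε n ^ 2 := by
        rw [eq_div_iff (pow_ne_zero 2 (hεne n))]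
        linear_combination -hDe n
      simp only [hudef]
      rw [h9]; field_simp [hεne n, hLne, hn.ne']; ring
    have hT : Tendsto (fun n => -(u n / ε n) / L + L * P n * (c2 + D n)) atTop
        (nhds (-(1 / L) + L * L * c2)) := by
      have h5 := (hue.neg.div_const L).add
        (((tendsto_const_nhds : Tendsto (fun _ : ℕ => L) atTop (nhds L)).mul hPL).mul
          ((tendsto_const_nhds : Tendsto (fun _ : ℕ => c2) atTop (nhds c2)).add hD))
      convert h5 using 2
      field_simp; ring
    have hQ := hT.congr' heq
    have hge : 0 ≤ -(1 / L) + L * L * c2 := by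
      refine ge_of_tendsto' hQ fun n => div_nonneg ?_ (by positivity)
      have := hP2 n; simp only [hudef]; linarith
    have h7 : 1 / L * L = 1 := by field_simp
    rw [div_le_iff₀ (by positivity : (0:ℝ) < L ^ 3)]
    nlinarith [mul_nonneg hge hL.le, h7]

theorem stmt1 (a b c : ℝ) (hab : a < b) (ε : ℕ → ℝ) (a1 a2 b1 b2 c1 c2 : ℝ)
    (h : AdmitsExpansion a b c ε a1 a2 b1 b2 c1 c2) :
    (0 ≤ a1 ∧ a1 ≤ 1) ∧ (a1 = 1 → a2 ≤ 0) ∧ (a1 = 0 → 0 ≤ a2) ∧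
    (0 ≤ b1 ∧ b1 ≤ 1) ∧ (b1 = 1 → b2 ≤ 0) ∧ (b1 = 0 → 0 ≤ b2) ∧
    |c1| ≤ 1 / (b - a) ^ 2 ∧
    (c1 = 1 / (b - a) ^ 2 → c2 ≤ 1 / (b - a) ^ 3) ∧
    (c1 = -1 / (b - a) ^ 2 → 1 / (b - a) ^ 3 ≤ c2) := by
  obtain ⟨hεpos, hε0, hoa, hob, hoc⟩ := h
  have hεne : ∀ n, ε n ≠ 0 := fun n => (hεpos n).ne'
  -- bounds for F
  have hF0 : ∀ n, 0 ≤ ε n * (c + (kk1 a c (ε n) : ℝ)) - a := by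
    intro n
    have h1 : a / ε n - c ≤ (kk1 a c (ε n) : ℝ) := Int.le_ceil _
    have h2 : a / ε n * ε n = a := div_mul_cancel₀ a (hεne n)
    nlinarith [mul_le_mul_of_nonneg_left h1 (hεpos n).le]
  have hF1 : ∀ n, ε n * (c + (kk1 a c (ε n) : ℝ)) - a < ε n := by
    intro n
    have h1 : (kk1 a c (ε n) : ℝ) < a / ε n - c + 1 := Int.ceil_lt_add_one _
    have h2 : a / ε n * ε n = a := div_mul_cancel₀ a (hεne n)
    nlinarith [mul_lt_mul_of_pos_left h1 (hεpos n)]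
  have hG0 : ∀ n, 0 ≤ b - ε n * (c + (kk2 b c (ε n) : ℝ)) := by
    intro n
    have h1 : (kk2 b c (ε n) : ℝ) ≤ b / ε n - c := Int.floor_le _
    have h2 : b / ε n * ε n = b := div_mul_cancel₀ b (hεne n)
    nlinarith [mul_le_mul_of_nonneg_left h1 (hεpos n).le]
  have hG1 : ∀ n, b - ε n * (c + (kk2 b c (ε n) : ℝ)) < ε n := by
    intro n
    have h1 : b / ε n - c - 1 < (kk2 b c (ε n) : ℝ) := by
      have := Int.lt_floor_add_one (b / ε n - c)
      have h3 : b / ε n - c - 1 < (⌊b / ε n - c⌋ : ℝ) := by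
        linarith [Int.lt_floor_add_one (b / ε n - c)]
      exact h3
    have h2 : b / ε n * ε n = b := div_mul_cancel₀ b (hεne n)
    nlinarith [mul_lt_mul_of_pos_left h1 (hεpos n)]
  have hA := partA ε (fun n => ε n * (c + (kk1 a c (ε n) : ℝ)) - a) hεpos hε0 hF0 hF1 a1 a2 hoa
  have hB := partA ε (fun n => b - ε n * (c + (kk2 b c (ε n) : ℝ))) hεpos hε0 hG0 hG1 b1 b2 hob
  -- identity for P
  have hid : ∀ n, (NN a b c (ε n) : ℝ) * ε n = (b - a) +
      (ε n - (ε n * (c + (kk1 a c (ε n) : ℝ)) - a) - (b - ε n * (c + (kk2 b c (ε n) : ℝ)))) := by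
    intro n
    simp only [NN]
    push_cast
    ring
  have hP1 : ∀ n, (b - a) - ε n < (NN a b c (ε n) : ℝ) * ε n := by
    intro n; rw [hid n]; linarith [hF1 n, hG1 n]
  have hP2 : ∀ n, (NN a b c (ε n) : ℝ) * ε n ≤ (b - a) + ε n := by
    intro n; rw [hid n]; linarith [hF0 n, hG0 n]
  have hC := partC ε (fun n => (NN a b c (ε n) : ℝ) * ε n) (b - a) (by linarith) hεpos hε0
    hP1 hP2 c1 c2 hoc
  exact ⟨hA.1, hA.2.1, hA.2.2, hB.1, hB.2.1, hB.2.2, hC.1, hC.2.1, hC.2.2⟩
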